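/- Let A be a semigroup in a braided monoidal category C whose multiplication m is non-degenerate with respect to some class of objects containing A and A⊗A, and let t₁, t₂, t₃, t₄ : A⊗A → A⊗A satisfy all six compatibility relations (c12)–(c34). Then the four interchange relations — (t₂⊗1)∘(1⊗t₁) = (1⊗t₁)∘(t₂⊗1), (t₄⊗1)∘(1⊗t₁) = (1⊗t₁)∘(t₄⊗1), (t₂⊗1)∘(1⊗t₃) = (1⊗t₃)∘(t₂⊗1), and (t₄⊗1)∘(1⊗t₃) = (1⊗t₃)∘(t₄⊗1), all morphisms A⊗A⊗A → A⊗A⊗A — are equivalent to each other. -/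

import Mathlib

open CategoryTheory Category MonoidalCategory

universe v u

namespace WeakMultiplierBimonoid

variable {C : Type u} [Category.{v} C] [MonoidalCategory C] [BraidedCategory C]

/-- For `f : A ⊗ A ⟶ A ⊗ A`, the morphism `f ⊗ 1 : A ⊗ (A ⊗ A) ⟶ A ⊗ (A ⊗ A)`. -/
def wl {A : C} (f : A ⊗ A ⟶ A ⊗ A) : A ⊗ (A ⊗ A) ⟶ A ⊗ (A ⊗ A) :=
  (α_ A A A).inv ≫ (f ▷ A) ≫ (α_ A A A).hom

/-- For `f : A ⊗ A ⟶ A`, the morphism `f ⊗ 1 : A ⊗ (A ⊗ A) ⟶ A ⊗ A`. -/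
def ml {A : C} (f : A ⊗ A ⟶ A) : A ⊗ (A ⊗ A) ⟶ A ⊗ A :=
  (α_ A A A).inv ≫ (f ▷ A)

/-- A morphism `v : Z ⊗ V ⟶ W` is non-degenerate on the left with respect to a class
`𝒴` of objects if for every `X` and every `Y ∈ 𝒴` the map
`Hom(X, V ⊗ Y) → Hom(Z ⊗ X, W ⊗ Y)`, `g ↦ (v ⊗ 1) ∘ (1 ⊗ g)`, is injective. -/
def NdLeftOn {Z V W : C} (v : Z ⊗ V ⟶ W) (𝒴 : Set C) : Prop :=
  ∀ (X : C), ∀ Y ∈ 𝒴, Function.Injective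
    (fun g : X ⟶ V ⊗ Y => (Z ◁ g) ≫ (α_ Z V Y).inv ≫ (v ▷ Y))

/-- Non-degenerate on the right with respect to `𝒴`: `v ∘ c` is non-degenerate on the
left with respect to `𝒴`. -/
def NdRightOn {Z V W : C} (v : Z ⊗ V ⟶ W) (𝒴 : Set C) : Prop :=
  NdLeftOn ((β_ V Z).hom ≫ v) 𝒴

/-- Relation (c12): `(m ⊗ 1) ∘ (1 ⊗ t₁) = (1 ⊗ m) ∘ (t₂ ⊗ 1)`. -/
def C12 {A : C} (m : A ⊗ A ⟶ A) (t₁ t₂ : A ⊗ A ⟶ A ⊗ A) : Prop :=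
  (A ◁ t₁) ≫ ml m = wl t₂ ≫ (A ◁ m)

/-- Relation (c13): `(1 ⊗ m) ∘ (1 ⊗ c) ∘ (t₁ ⊗ 1) = (1 ⊗ m) ∘ (t₃ ⊗ 1) ∘ (1 ⊗ c)`. -/
def C13 {A : C} (m : A ⊗ A ⟶ A) (t₁ t₃ : A ⊗ A ⟶ A ⊗ A) : Prop :=
  wl t₁ ≫ (A ◁ (β_ A A).hom) ≫ (A ◁ m)
    = (A ◁ (β_ A A).hom) ≫ wl t₃ ≫ (A ◁ m)

/-- Relation (c14): `(m ⊗ 1) ∘ (c ⊗ 1) ∘ (1 ⊗ t₁) = (1 ⊗ m) ∘ (t₄ ⊗ 1)`. -/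
def C14 {A : C} (m : A ⊗ A ⟶ A) (t₁ t₄ : A ⊗ A ⟶ A ⊗ A) : Prop :=
  (A ◁ t₁) ≫ wl (β_ A A).hom ≫ ml m = wl t₄ ≫ (A ◁ m)

/-- Relation (c23): `(1 ⊗ m) ∘ (1 ⊗ c) ∘ (t₂ ⊗ 1) = (m ⊗ 1) ∘ (1 ⊗ t₃)`. -/
def C23 {A : C} (m : A ⊗ A ⟶ A) (t₂ t₃ : A ⊗ A ⟶ A ⊗ A) : Prop :=
  wl t₂ ≫ (A ◁ (β_ A A).hom) ≫ (A ◁ m) = (A ◁ t₃) ≫ ml m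

/-- Relation (c24): `(m ⊗ 1) ∘ (c ⊗ 1) ∘ (1 ⊗ t₂) = (m ⊗ 1) ∘ (1 ⊗ t₄) ∘ (c ⊗ 1)`. -/
def C24 {A : C} (m : A ⊗ A ⟶ A) (t₂ t₄ : A ⊗ A ⟶ A ⊗ A) : Prop :=
  (A ◁ t₂) ≫ wl (β_ A A).hom ≫ ml m = wl (β_ A A).hom ≫ (A ◁ t₄) ≫ ml m

/-- Relation (c34): `(m ⊗ 1) ∘ (c ⊗ 1) ∘ (1 ⊗ t₃) = (1 ⊗ m) ∘ (1 ⊗ c) ∘ (t₄ ⊗ 1)`. -/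
def C34 {A : C} (m : A ⊗ A ⟶ A) (t₃ t₄ : A ⊗ A ⟶ A ⊗ A) : Prop :=
  (A ◁ t₃) ≫ wl (β_ A A).hom ≫ ml m = wl t₄ ≫ (A ◁ (β_ A A).hom) ≫ (A ◁ m)

/-- The interchange relation `(x ⊗ 1) ∘ (1 ⊗ y) = (1 ⊗ y) ∘ (x ⊗ 1)`. -/
def Interchange {A : C} (x y : A ⊗ A ⟶ A ⊗ A) : Prop :=
  (A ◁ y) ≫ wl x = wl x ≫ (A ◁ y)

/-! ### Auxiliary structural morphisms and lemmas -/

section Aux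

open BraidedCategory

variable {A : C}

set_option maxHeartbeats 1000000

/-- Left non-degeneracy comparison map. -/
def Pm {A : C} (m : A ⊗ A ⟶ A) : A ⊗ (A ⊗ (A ⊗ A)) ⟶ A ⊗ (A ⊗ A) :=
  (α_ A A (A ⊗ A)).inv ≫ (m ▷ (A ⊗ A))

/-- Right non-degeneracy comparison map. -/
def Qm {A : C} (m : A ⊗ A ⟶ A) : A ⊗ (A ⊗ (A ⊗ A)) ⟶ A ⊗ (A ⊗ A) :=
  (α_ A A (A ⊗ A)).inv ≫ ((β_ A A).hom ▷ (A ⊗ A)) ≫ (m ▷ (A ⊗ A))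

/-- Cyclic rotation `(u,v,w) ↦ (w,u,v)` using positive crossings. -/
def gam (A : C) : A ⊗ (A ⊗ A) ≅ A ⊗ (A ⊗ A) :=
  (α_ A A A).symm ≪≫ β_ (A ⊗ A) A

/-- Cyclic rotation `(u,v,w) ↦ (w,u,v)` using inverse crossings. -/
def gam' (A : C) : A ⊗ (A ⊗ A) ≅ A ⊗ (A ⊗ A) :=
  (α_ A A A).symm ≪≫ (β_ A (A ⊗ A)).symm

/-- Move the first strand to the last position, by inverse crossings. -/
def sig (A : C) : A ⊗ (A ⊗ (A ⊗ A)) ≅ A ⊗ (A ⊗ (A ⊗ A)) :=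
  (β_ (A ⊗ (A ⊗ A)) A).symm ≪≫ α_ A (A ⊗ A) A ≪≫ whiskerLeftIso A (α_ A A A)

/-- Move the first strand to the last position, by positive crossings. -/
def xi (A : C) : A ⊗ (A ⊗ (A ⊗ A)) ≅ A ⊗ (A ⊗ (A ⊗ A)) :=
  β_ A (A ⊗ (A ⊗ A)) ≪≫ α_ A (A ⊗ A) A ≪≫ whiskerLeftIso A (α_ A A A)

/-- Braid the first two strands. -/
def Bm (A : C) : A ⊗ (A ⊗ (A ⊗ A)) ≅ A ⊗ (A ⊗ (A ⊗ A)) :=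
  (α_ A A (A ⊗ A)).symm ≪≫ whiskerRightIso (β_ A A) (A ⊗ A) ≪≫ α_ A A (A ⊗ A)

/-- Action of legs 1-2 on the triple tensor. -/
def Xm {A : C} (x : A ⊗ A ⟶ A ⊗ A) : A ⊗ (A ⊗ (A ⊗ A)) ⟶ A ⊗ (A ⊗ (A ⊗ A)) :=
  (α_ A A (A ⊗ A)).inv ≫ (x ▷ (A ⊗ A)) ≫ (α_ A A (A ⊗ A)).hom

/-- A morphism acting on legs 1-3, with the fourth leg as spectator. -/
def Emap {A : C} (h : A ⊗ (A ⊗ A) ⟶ A ⊗ A) : A ⊗ (A ⊗ (A ⊗ A)) ⟶ A ⊗ (A ⊗ A) :=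
  (A ◁ (α_ A A A).inv) ≫ (α_ A (A ⊗ A) A).inv ≫ (h ▷ A) ≫ (α_ A A A).hom

lemma pm_comm (m : A ⊗ A ⟶ A) (x : A ⊗ A ⟶ A ⊗ A) :
    (A ◁ (A ◁ x)) ≫ Pm m = Pm m ≫ (A ◁ x) := by
  simp only [Pm]
  rw [associator_inv_naturality_right_assoc, whisker_exchange]
  simp only [assoc]

lemma qm_comm (m : A ⊗ A ⟶ A) (x : A ⊗ A ⟶ A ⊗ A) :
    (A ◁ (A ◁ x)) ≫ Qm m = Qm m ≫ (A ◁ x) := by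
  simp only [Qm]
  rw [associator_inv_naturality_right_assoc, whisker_exchange_assoc, whisker_exchange]
  simp only [assoc]

lemma injL {𝒴 : Set C} {m : A ⊗ A ⟶ A} (hndl : NdLeftOn m 𝒴) (hAA : (A ⊗ A) ∈ 𝒴)
    {X : C} {f g : X ⟶ A ⊗ (A ⊗ A)}
    (h : (A ◁ f) ≫ Pm m = (A ◁ g) ≫ Pm m) : f = g := by
  apply hndl X (A ⊗ A) hAA
  simpa [Pm] using h

lemma injR {𝒴 : Set C} {m : A ⊗ A ⟶ A} (hndr : NdRightOn m 𝒴) (hAA : (A ⊗ A) ∈ 𝒴)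
    {X : C} {f g : X ⟶ A ⊗ (A ⊗ A)}
    (h : (A ◁ f) ≫ Qm m = (A ◁ g) ≫ Qm m) : f = g := by
  apply hndr X (A ⊗ A) hAA
  simpa [Qm, comp_whiskerRight] using h

/-! #### Lemmas for the `t₂ ↔ t₄` comparison -/

lemma akey1 (m : A ⊗ A ⟶ A) (t : A ⊗ A ⟶ A ⊗ A) :
    (A ◁ wl t) ≫ Qm m = Emap ((A ◁ t) ≫ wl (β_ A A).hom ≫ ml m) := by
  simp only [Emap, Qm, wl, ml, comp_whiskerRight, MonoidalCategory.whiskerLeft_comp, assoc]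
  monoidal

lemma akey2 (m : A ⊗ A ⟶ A) (t : A ⊗ A ⟶ A ⊗ A) :
    (Bm A).hom ≫ (A ◁ wl t) ≫ Pm m = Emap (wl (β_ A A).hom ≫ (A ◁ t) ≫ ml m) := by
  simp only [Emap, Pm, Bm, wl, ml, Iso.trans_hom, Iso.symm_hom, whiskerRightIso_hom,
    comp_whiskerRight, MonoidalCategory.whiskerLeft_comp, assoc]
  monoidal

lemma bm_comm (y : A ⊗ A ⟶ A ⊗ A) :
    (A ◁ (A ◁ y)) ≫ (Bm A).hom = (Bm A).hom ≫ (A ◁ (A ◁ y)) := by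
  simp only [Bm, Iso.trans_hom, Iso.symm_hom, whiskerRightIso_hom, assoc]
  rw [associator_inv_naturality_right_assoc, whisker_exchange_assoc,
    associator_naturality_right]

/-- The `t₂ ↔ t₄` comparison (uses (c24) and non-degeneracy). -/
lemma interchange24 {𝒴 : Set C} {m : A ⊗ A ⟶ A}
    (hndl : NdLeftOn m 𝒴) (hndr : NdRightOn m 𝒴) (hAA : (A ⊗ A) ∈ 𝒴)
    {t₂ t₄ : A ⊗ A ⟶ A ⊗ A} (h24 : C24 m t₂ t₄) (y : A ⊗ A ⟶ A ⊗ A) :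
    Interchange t₂ y ↔ Interchange t₄ y := by
  have h2l : (A ◁ ((A ◁ y) ≫ wl t₂)) ≫ Qm m
      = (Bm A).hom ≫ (A ◁ ((A ◁ y) ≫ wl t₄)) ≫ Pm m := by
    calc (A ◁ ((A ◁ y) ≫ wl t₂)) ≫ Qm m
        = (A ◁ (A ◁ y)) ≫ ((A ◁ wl t₂) ≫ Qm m) := by
          simp only [MonoidalCategory.whiskerLeft_comp, assoc]
      _ = (A ◁ (A ◁ y)) ≫ Emap (wl (β_ A A).hom ≫ (A ◁ t₄) ≫ ml m) := by
          rw [akey1, h24]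
      _ = (A ◁ (A ◁ y)) ≫ (Bm A).hom ≫ (A ◁ wl t₄) ≫ Pm m := by rw [akey2]
      _ = (Bm A).hom ≫ (A ◁ ((A ◁ y) ≫ wl t₄)) ≫ Pm m := by
          rw [← assoc, bm_comm]
          simp only [MonoidalCategory.whiskerLeft_comp, assoc]
  have h2r : (A ◁ (wl t₂ ≫ (A ◁ y))) ≫ Qm m
      = (Bm A).hom ≫ (A ◁ (wl t₄ ≫ (A ◁ y))) ≫ Pm m := by
    calc (A ◁ (wl t₂ ≫ (A ◁ y))) ≫ Qm m
        = (A ◁ wl t₂) ≫ (A ◁ (A ◁ y)) ≫ Qm m := by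
          simp only [MonoidalCategory.whiskerLeft_comp, assoc]
      _ = ((A ◁ wl t₂) ≫ Qm m) ≫ (A ◁ y) := by rw [qm_comm]; simp only [assoc]
      _ = (Emap (wl (β_ A A).hom ≫ (A ◁ t₄) ≫ ml m)) ≫ (A ◁ y) := by
          rw [akey1, h24]
      _ = ((Bm A).hom ≫ (A ◁ wl t₄) ≫ Pm m) ≫ (A ◁ y) := by rw [akey2]
      _ = (Bm A).hom ≫ (A ◁ wl t₄) ≫ (A ◁ (A ◁ y)) ≫ Pm m := by
          rw [pm_comm]; simp only [assoc]
      _ = (Bm A).hom ≫ (A ◁ (wl t₄ ≫ (A ◁ y))) ≫ Pm m := by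
          simp only [MonoidalCategory.whiskerLeft_comp, assoc]
  constructor
  · intro h
    apply injL hndl hAA
    have e : (Bm A).hom ≫ (A ◁ ((A ◁ y) ≫ wl t₄)) ≫ Pm m
        = (Bm A).hom ≫ (A ◁ (wl t₄ ≫ (A ◁ y))) ≫ Pm m := by
      rw [← h2l, ← h2r, h]
    simpa only [assoc] using (cancel_epi (Bm A).hom).mp (by simpa only [assoc] using e)
  · intro h
    apply injR hndr hAA
    rw [h2l, h2r, h]

/-! #### Lemmas for the `t₁ ↔ t₃` comparison -/

lemma g2 :
    (A ◁ (gam A).hom) ≫ (α_ A A (A ⊗ A)).inv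
      = (sig A).hom ≫ (A ◁ (A ◁ (β_ A A).hom)) ≫ (α_ A A (A ⊗ A)).inv
        ≫ (β_ (A ⊗ A) (A ⊗ A)).hom := by
  simp only [gam, sig, Iso.trans_hom, Iso.symm_hom, whiskerLeftIso_hom, assoc]
  simp

lemma g3' :
    (α_ A A (A ⊗ A)).inv ≫ ((β_ A A).hom ▷ (A ⊗ A)) ≫ (β_ (A ⊗ A) (A ⊗ A)).hom
      = (A ◁ (β_ A (A ⊗ A)).hom) ≫ (A ◁ (α_ A A A).hom)
        ≫ ((β_ A (A ⊗ (A ⊗ A))).hom ≫ (α_ A (A ⊗ A) A).hom ≫ (A ◁ (α_ A A A).hom))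
        ≫ (α_ A A (A ⊗ A)).inv := by
  conv_lhs => rw [BraidedCategory.braiding_naturality_left, braiding_tensor_left_hom]
  simp only [braiding_tensor_right_hom, MonoidalCategory.whiskerLeft_comp,
    comp_whiskerRight, assoc]
  monoidal

lemma g3 :
    (A ◁ (gam' A).hom) ≫ (α_ A A (A ⊗ A)).inv ≫ ((β_ A A).hom ▷ (A ⊗ A))
      = (xi A).hom ≫ (α_ A A (A ⊗ A)).inv ≫ (β_ (A ⊗ A) (A ⊗ A)).inv := by
  rw [← cancel_mono (β_ (A ⊗ A) (A ⊗ A)).hom]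
  simp only [gam', xi, Iso.trans_hom, Iso.symm_hom, whiskerLeftIso_hom, assoc,
    Iso.inv_hom_id, comp_id]
  rw [g3']
  simp only [MonoidalCategory.whiskerLeft_comp, assoc, xi, Iso.trans_hom,
    whiskerLeftIso_hom]
  slice_lhs 2 3 =>
    rw [← MonoidalCategory.whiskerLeft_comp, Iso.inv_hom_id, MonoidalCategory.whiskerLeft_id]
  simp

lemma ob1 (x : A ⊗ A ⟶ A ⊗ A) :
    wl x ≫ (gam A).hom = (gam A).hom ≫ (A ◁ x) := by
  simp only [wl, gam, Iso.trans_hom, Iso.symm_hom, assoc, Iso.hom_inv_id_assoc]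
  rw [BraidedCategory.braiding_naturality_left]

lemma ob1' (x : A ⊗ A ⟶ A ⊗ A) :
    wl x ≫ (gam' A).hom = (gam' A).hom ≫ (A ◁ x) := by
  simp only [wl, gam', Iso.trans_hom, Iso.symm_hom, assoc, Iso.hom_inv_id_assoc]
  rw [braiding_inv_naturality_left]

lemma ob3 (f : A ⊗ A ⟶ A ⊗ A) :
    (A ◁ (A ◁ f)) ≫ (sig A).hom = (sig A).hom ≫ (A ◁ wl f) := by
  simp only [sig, Iso.trans_hom, Iso.symm_hom, whiskerLeftIso_hom, assoc]
  rw [braiding_inv_naturality_right_assoc]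
  simp only [wl, MonoidalCategory.whiskerLeft_comp]
  monoidal

lemma ob3' (f : A ⊗ A ⟶ A ⊗ A) :
    (A ◁ (A ◁ f)) ≫ (xi A).hom = (xi A).hom ≫ (A ◁ wl f) := by
  simp only [xi, Iso.trans_hom, whiskerLeftIso_hom, assoc]
  rw [BraidedCategory.braiding_naturality_right_assoc]
  simp only [wl, MonoidalCategory.whiskerLeft_comp]
  monoidal

lemma ob6a (x : A ⊗ A ⟶ A ⊗ A) :
    (A ◁ wl x) ≫ (sig A).hom = (sig A).hom ≫ Xm x := by
  simp only [sig, Xm, Iso.trans_hom, Iso.symm_hom, whiskerLeftIso_hom, assoc]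
  rw [braiding_inv_naturality_right_assoc]
  simp only [wl, comp_whiskerRight, MonoidalCategory.whiskerLeft_comp]
  monoidal

lemma ob6b (x : A ⊗ A ⟶ A ⊗ A) :
    (A ◁ wl x) ≫ (xi A).hom = (xi A).hom ≫ Xm x := by
  simp only [xi, Xm, Iso.trans_hom, whiskerLeftIso_hom, assoc]
  rw [BraidedCategory.braiding_naturality_right_assoc]
  simp only [wl, comp_whiskerRight, MonoidalCategory.whiskerLeft_comp]
  monoidal

lemma xm_comm (x : A ⊗ A ⟶ A ⊗ A) (g : A ⊗ A ⟶ A ⊗ A) :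
    (A ◁ (A ◁ g)) ≫ Xm x = Xm x ≫ (A ◁ (A ◁ g)) := by
  simp only [Xm, assoc]
  rw [associator_inv_naturality_right_assoc, whisker_exchange_assoc,
    associator_naturality_right]

lemma mp1 (m : A ⊗ A ⟶ A) :
    (A ◁ (A ◁ m)) ≫ (gam A).hom
      = (α_ A A (A ⊗ A)).inv ≫ (β_ (A ⊗ A) (A ⊗ A)).hom ≫ (m ▷ (A ⊗ A)) := by
  simp only [gam, Iso.trans_hom, Iso.symm_hom]
  rw [associator_inv_naturality_right_assoc, BraidedCategory.braiding_naturality_right]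

lemma mp2 (m : A ⊗ A ⟶ A) :
    (A ◁ (A ◁ m)) ≫ (gam' A).hom
      = (α_ A A (A ⊗ A)).inv ≫ (β_ (A ⊗ A) (A ⊗ A)).inv ≫ (m ▷ (A ⊗ A)) := by
  simp only [gam', Iso.trans_hom, Iso.symm_hom]
  rw [associator_inv_naturality_right_assoc, braiding_inv_naturality_right]

lemma b1 (m : A ⊗ A ⟶ A) (f : A ⊗ A ⟶ A ⊗ A) :
    (A ◁ ((A ◁ f) ≫ (gam A).hom)) ≫ Pm m
      = (sig A).hom ≫ (A ◁ (wl f ≫ (A ◁ (β_ A A).hom) ≫ (A ◁ m))) ≫ (gam A).hom := by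
  have hg2 : (A ◁ (gam A).hom) ≫ Pm m
      = (sig A).hom ≫ (A ◁ (A ◁ (β_ A A).hom)) ≫ (A ◁ (A ◁ m)) ≫ (gam A).hom := by
    have hG2 := g2 (C := C) (A := A)
    rw [mp1, Pm, reassoc_of% hG2]
  calc (A ◁ ((A ◁ f) ≫ (gam A).hom)) ≫ Pm m
      = (A ◁ (A ◁ f)) ≫ (A ◁ (gam A).hom) ≫ Pm m := by
        simp only [MonoidalCategory.whiskerLeft_comp, assoc]
    _ = (A ◁ (A ◁ f)) ≫ (sig A).hom ≫ (A ◁ (A ◁ (β_ A A).hom))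
          ≫ (A ◁ (A ◁ m)) ≫ (gam A).hom := by rw [hg2]
    _ = (sig A).hom ≫ (A ◁ wl f) ≫ (A ◁ (A ◁ (β_ A A).hom))
          ≫ (A ◁ (A ◁ m)) ≫ (gam A).hom := by rw [← assoc, ob3]; simp only [assoc]
    _ = (sig A).hom ≫ (A ◁ (wl f ≫ (A ◁ (β_ A A).hom) ≫ (A ◁ m))) ≫ (gam A).hom := by
        simp only [MonoidalCategory.whiskerLeft_comp, assoc]

lemma b2 (m : A ⊗ A ⟶ A) (f : A ⊗ A ⟶ A ⊗ A) :
    (A ◁ ((A ◁ f) ≫ (gam' A).hom)) ≫ Qm m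
      = (xi A).hom ≫ (A ◁ (A ◁ (β_ A A).inv))
        ≫ (A ◁ ((A ◁ (β_ A A).hom) ≫ wl f ≫ (A ◁ m))) ≫ (gam' A).hom := by
  have hg3 : (A ◁ (gam' A).hom) ≫ Qm m
      = (xi A).hom ≫ (A ◁ (A ◁ m)) ≫ (gam' A).hom := by
    have hG3 := g3 (C := C) (A := A)
    rw [mp2, Qm, reassoc_of% hG3]
  calc (A ◁ ((A ◁ f) ≫ (gam' A).hom)) ≫ Qm m
      = (A ◁ (A ◁ f)) ≫ (A ◁ (gam' A).hom) ≫ Qm m := by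
        simp only [MonoidalCategory.whiskerLeft_comp, assoc]
    _ = (A ◁ (A ◁ f)) ≫ (xi A).hom ≫ (A ◁ (A ◁ m)) ≫ (gam' A).hom := by rw [hg3]
    _ = (xi A).hom ≫ (A ◁ wl f) ≫ (A ◁ (A ◁ m)) ≫ (gam' A).hom := by
        rw [← assoc, ob3']; simp only [assoc]
    _ = (xi A).hom ≫ (A ◁ (A ◁ (β_ A A).inv)) ≫ (A ◁ (A ◁ (β_ A A).hom))
          ≫ (A ◁ wl f) ≫ (A ◁ (A ◁ m)) ≫ (gam' A).hom := by
        conv_rhs => rw [← MonoidalCategory.whiskerLeft_comp_assoc A ((A ◁ (β_ A A).inv)),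
          ← MonoidalCategory.whiskerLeft_comp A ((β_ A A).inv),
          Iso.inv_hom_id, MonoidalCategory.whiskerLeft_id, MonoidalCategory.whiskerLeft_id,
          id_comp]
    _ = (xi A).hom ≫ (A ◁ (A ◁ (β_ A A).inv))
          ≫ (A ◁ ((A ◁ (β_ A A).hom) ≫ wl f ≫ (A ◁ m))) ≫ (gam' A).hom := by
        simp only [MonoidalCategory.whiskerLeft_comp, assoc]

lemma th_eq :
    (gam' A).inv ≫ (gam A).hom = (β_ A (A ⊗ A)).hom ≫ (β_ (A ⊗ A) A).hom := by
  simp [gam, gam']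

lemma th_comm (x : A ⊗ A ⟶ A ⊗ A) :
    (A ◁ x) ≫ (β_ A (A ⊗ A)).hom ≫ (β_ (A ⊗ A) A).hom
      = (β_ A (A ⊗ A)).hom ≫ (β_ (A ⊗ A) A).hom ≫ (A ◁ x) := by
  rw [BraidedCategory.braiding_naturality_right_assoc,
    BraidedCategory.braiding_naturality_left]

/-- The `t₁ ↔ t₃` comparison (uses (c13) and non-degeneracy). -/
lemma interchange13 {𝒴 : Set C} {m : A ⊗ A ⟶ A}
    (hndl : NdLeftOn m 𝒴) (hndr : NdRightOn m 𝒴) (hAA : (A ⊗ A) ∈ 𝒴)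
    {t₁ t₃ : A ⊗ A ⟶ A ⊗ A} (h13 : C13 m t₁ t₃) (x : A ⊗ A ⟶ A ⊗ A) :
    Interchange x t₁ ↔ Interchange x t₃ := by
  -- the two comparison morphisms
  have key : (A ◁ ((A ◁ t₁) ≫ (gam A).hom)) ≫ Pm m
      = (sig A).hom ≫ (A ◁ (A ◁ (β_ A A).hom)) ≫ (xi A).inv
        ≫ ((A ◁ ((A ◁ t₃) ≫ (gam' A).hom)) ≫ Qm m)
        ≫ ((β_ A (A ⊗ A)).hom ≫ (β_ (A ⊗ A) A).hom) := by
    have e3 : (A ◁ ((A ◁ (β_ A A).hom) ≫ wl t₃ ≫ (A ◁ m))) ≫ (gam' A).hom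
        = (A ◁ (A ◁ (β_ A A).hom)) ≫ (xi A).inv
          ≫ ((A ◁ ((A ◁ t₃) ≫ (gam' A).hom)) ≫ Qm m) := by
      rw [← cancel_epi ((xi A).hom ≫ (A ◁ (A ◁ (β_ A A).inv)))]
      have hb2 := b2 m t₃
      simp only [assoc] at hb2 ⊢
      rw [← hb2]
      rw [← MonoidalCategory.whiskerLeft_comp_assoc A ((A ◁ (β_ A A).inv)),
        ← MonoidalCategory.whiskerLeft_comp A ((β_ A A).inv),
        Iso.inv_hom_id, MonoidalCategory.whiskerLeft_id, MonoidalCategory.whiskerLeft_id,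
        id_comp, Iso.hom_inv_id_assoc]
    calc (A ◁ ((A ◁ t₁) ≫ (gam A).hom)) ≫ Pm m
        = (sig A).hom ≫ (A ◁ (wl t₁ ≫ (A ◁ (β_ A A).hom) ≫ (A ◁ m))) ≫ (gam A).hom :=
          b1 m t₁
      _ = (sig A).hom ≫ (A ◁ ((A ◁ (β_ A A).hom) ≫ wl t₃ ≫ (A ◁ m))) ≫ (gam A).hom := by
          rw [h13]
      _ = (sig A).hom ≫ ((A ◁ ((A ◁ (β_ A A).hom) ≫ wl t₃ ≫ (A ◁ m))) ≫ (gam' A).hom)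
            ≫ ((gam' A).inv ≫ (gam A).hom) := by
          rw [assoc, Iso.hom_inv_id_assoc]
      _ = _ := by
          rw [e3, th_eq]
          simp only [assoc]
  -- commutation of `A ◁ wl x` with the comparison isos
  have cxi : Xm x ≫ (xi A).inv = (xi A).inv ≫ (A ◁ wl x) := by
    rw [← cancel_epi (xi A).hom, ← assoc, ← ob6b]
    simp
  have cS : (A ◁ wl x) ≫ (sig A).hom ≫ (A ◁ (A ◁ (β_ A A).hom)) ≫ (xi A).inv
      = (sig A).hom ≫ (A ◁ (A ◁ (β_ A A).hom)) ≫ (xi A).inv ≫ (A ◁ wl x) := by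
    rw [← assoc, ob6a, assoc, ← assoc (Xm x), ← xm_comm, assoc, cxi]
  -- the equivalence of the injected interchange relations
  have equiv : ((A ◁ ((A ◁ t₁) ≫ (gam A).hom)) ≫ Pm m) ≫ (A ◁ x)
        = (A ◁ wl x) ≫ ((A ◁ ((A ◁ t₁) ≫ (gam A).hom)) ≫ Pm m)
      ↔ ((A ◁ ((A ◁ t₃) ≫ (gam' A).hom)) ≫ Qm m) ≫ (A ◁ x)
        = (A ◁ wl x) ≫ ((A ◁ ((A ◁ t₃) ≫ (gam' A).hom)) ≫ Qm m) := by
    rw [key]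
    constructor
    · intro h
      have h1 : (sig A).hom ≫ (A ◁ (A ◁ (β_ A A).hom)) ≫ (xi A).inv
            ≫ ((A ◁ ((A ◁ t₃) ≫ (gam' A).hom)) ≫ Qm m) ≫ (A ◁ x)
            ≫ ((β_ A (A ⊗ A)).hom ≫ (β_ (A ⊗ A) A).hom)
          = (sig A).hom ≫ (A ◁ (A ◁ (β_ A A).hom)) ≫ (xi A).inv
            ≫ (A ◁ wl x) ≫ ((A ◁ ((A ◁ t₃) ≫ (gam' A).hom)) ≫ Qm m)
            ≫ ((β_ A (A ⊗ A)).hom ≫ (β_ (A ⊗ A) A).hom) := by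
        have h' := h
        simp only [assoc] at h'
        rw [← th_comm x] at h'
        rw [reassoc_of% cS] at h'
        simp only [assoc]
        exact h'
      have h2 := h1
      rw [cancel_epi ((sig A).hom), cancel_epi (A ◁ (A ◁ (β_ A A).hom)),
        cancel_epi ((xi A).inv)] at h2
      rw [← cancel_mono ((β_ A (A ⊗ A)).hom ≫ (β_ (A ⊗ A) A).hom)]
      simpa only [assoc] using h2
    · intro h
      have h1 : ((A ◁ ((A ◁ t₃) ≫ (gam' A).hom)) ≫ Qm m) ≫ (A ◁ x)
            ≫ ((β_ A (A ⊗ A)).hom ≫ (β_ (A ⊗ A) A).hom)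
          = (A ◁ wl x) ≫ ((A ◁ ((A ◁ t₃) ≫ (gam' A).hom)) ≫ Qm m)
            ≫ ((β_ A (A ⊗ A)).hom ≫ (β_ (A ⊗ A) A).hom) := by
        simp only [assoc] at h ⊢
        rw [← reassoc_of% h]
      calc ((sig A).hom ≫ (A ◁ (A ◁ (β_ A A).hom)) ≫ (xi A).inv
            ≫ ((A ◁ ((A ◁ t₃) ≫ (gam' A).hom)) ≫ Qm m)
            ≫ ((β_ A (A ⊗ A)).hom ≫ (β_ (A ⊗ A) A).hom)) ≫ (A ◁ x)
          = (sig A).hom ≫ (A ◁ (A ◁ (β_ A A).hom)) ≫ (xi A).inv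
            ≫ ((A ◁ ((A ◁ t₃) ≫ (gam' A).hom)) ≫ Qm m) ≫ (A ◁ x)
            ≫ ((β_ A (A ⊗ A)).hom ≫ (β_ (A ⊗ A) A).hom) := by
            simp only [assoc]
            rw [← th_comm x]
        _ = (sig A).hom ≫ (A ◁ (A ◁ (β_ A A).hom)) ≫ (xi A).inv
            ≫ (A ◁ wl x) ≫ ((A ◁ ((A ◁ t₃) ≫ (gam' A).hom)) ≫ Qm m)
            ≫ ((β_ A (A ⊗ A)).hom ≫ (β_ (A ⊗ A) A).hom) := by
            simp only [assoc] at h1 ⊢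
            rw [h1]
        _ = (A ◁ wl x) ≫ (sig A).hom ≫ (A ◁ (A ◁ (β_ A A).hom)) ≫ (xi A).inv
            ≫ ((A ◁ ((A ◁ t₃) ≫ (gam' A).hom)) ≫ Qm m)
            ≫ ((β_ A (A ⊗ A)).hom ≫ (β_ (A ⊗ A) A).hom) := by
            rw [← reassoc_of% cS]
  constructor
  · intro h
    have hD : ((A ◁ ((A ◁ t₁) ≫ (gam A).hom)) ≫ Pm m) ≫ (A ◁ x)
        = (A ◁ wl x) ≫ ((A ◁ ((A ◁ t₁) ≫ (gam A).hom)) ≫ Pm m) := by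
      have e1 : (A ◁ (((A ◁ t₁) ≫ wl x) ≫ (gam A).hom)) ≫ Pm m
          = ((A ◁ ((A ◁ t₁) ≫ (gam A).hom)) ≫ Pm m) ≫ (A ◁ x) := by
        rw [assoc, ob1]
        simp only [MonoidalCategory.whiskerLeft_comp, assoc]
        rw [pm_comm]
      have e2 : (A ◁ ((wl x ≫ (A ◁ t₁)) ≫ (gam A).hom)) ≫ Pm m
          = (A ◁ wl x) ≫ ((A ◁ ((A ◁ t₁) ≫ (gam A).hom)) ≫ Pm m) := by
        simp only [MonoidalCategory.whiskerLeft_comp, assoc]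
      rw [← e1, ← e2, h]
    have hQ := equiv.mp hD
    have e1 : (A ◁ (((A ◁ t₃) ≫ wl x) ≫ (gam' A).hom)) ≫ Qm m
        = ((A ◁ ((A ◁ t₃) ≫ (gam' A).hom)) ≫ Qm m) ≫ (A ◁ x) := by
      rw [assoc, ob1']
      simp only [MonoidalCategory.whiskerLeft_comp, assoc]
      rw [qm_comm]
    have e2 : (A ◁ ((wl x ≫ (A ◁ t₃)) ≫ (gam' A).hom)) ≫ Qm m
        = (A ◁ wl x) ≫ ((A ◁ ((A ◁ t₃) ≫ (gam' A).hom)) ≫ Qm m) := by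
      simp only [MonoidalCategory.whiskerLeft_comp, assoc]
    have : ((A ◁ t₃) ≫ wl x) ≫ (gam' A).hom = (wl x ≫ (A ◁ t₃)) ≫ (gam' A).hom := by
      apply injR hndr hAA
      rw [e1, e2, hQ]
    have := (cancel_mono (gam' A).hom).mp this
    exact this
  · intro h
    have hQ : ((A ◁ ((A ◁ t₃) ≫ (gam' A).hom)) ≫ Qm m) ≫ (A ◁ x)
        = (A ◁ wl x) ≫ ((A ◁ ((A ◁ t₃) ≫ (gam' A).hom)) ≫ Qm m) := by
      have e1 : (A ◁ (((A ◁ t₃) ≫ wl x) ≫ (gam' A).hom)) ≫ Qm m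
          = ((A ◁ ((A ◁ t₃) ≫ (gam' A).hom)) ≫ Qm m) ≫ (A ◁ x) := by
        rw [assoc, ob1']
        simp only [MonoidalCategory.whiskerLeft_comp, assoc]
        rw [qm_comm]
      have e2 : (A ◁ ((wl x ≫ (A ◁ t₃)) ≫ (gam' A).hom)) ≫ Qm m
          = (A ◁ wl x) ≫ ((A ◁ ((A ◁ t₃) ≫ (gam' A).hom)) ≫ Qm m) := by
        simp only [MonoidalCategory.whiskerLeft_comp, assoc]
      rw [← e1, ← e2, h]
    have hD := equiv.mpr hQ
    have e1 : (A ◁ (((A ◁ t₁) ≫ wl x) ≫ (gam A).hom)) ≫ Pm m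
        = ((A ◁ ((A ◁ t₁) ≫ (gam A).hom)) ≫ Pm m) ≫ (A ◁ x) := by
      rw [assoc, ob1]
      simp only [MonoidalCategory.whiskerLeft_comp, assoc]
      rw [pm_comm]
    have e2 : (A ◁ ((wl x ≫ (A ◁ t₁)) ≫ (gam A).hom)) ≫ Pm m
        = (A ◁ wl x) ≫ ((A ◁ ((A ◁ t₁) ≫ (gam A).hom)) ≫ Pm m) := by
      simp only [MonoidalCategory.whiskerLeft_comp, assoc]
    have : ((A ◁ t₁) ≫ wl x) ≫ (gam A).hom = (wl x ≫ (A ◁ t₁)) ≫ (gam A).hom := by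
      apply injL hndl hAA
      rw [e1, e2, hD]
    exact (cancel_mono (gam A).hom).mp this

end Aux

/-- Lemma 2.6: the four interchange relations are equivalent. -/
theorem lemma_interchange
    (A : C) (𝒴 : Set C) (hA : A ∈ 𝒴) (hAA : (A ⊗ A) ∈ 𝒴)
    (m : A ⊗ A ⟶ A)
    (hassoc : ml m ≫ m = (A ◁ m) ≫ m)
    (hndl : NdLeftOn m 𝒴) (hndr : NdRightOn m 𝒴)
    (t₁ t₂ t₃ t₄ : A ⊗ A ⟶ A ⊗ A)
    (h12 : C12 m t₁ t₂) (h13 : C13 m t₁ t₃) (h14 : C14 m t₁ t₄)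
    (h23 : C23 m t₂ t₃) (h24 : C24 m t₂ t₄) (h34 : C34 m t₃ t₄) :
    [Interchange t₂ t₁, Interchange t₄ t₁,
     Interchange t₂ t₃, Interchange t₄ t₃].TFAE := by
  tfae_have 1 ↔ 2 := interchange24 hndl hndr hAA h24 t₁
  tfae_have 3 ↔ 4 := interchange24 hndl hndr hAA h24 t₃
  tfae_have 1 ↔ 3 := interchange13 hndl hndr hAA h13 t₂
  tfae_finish

end WeakMultiplierBimonoid
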